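/- Suppose the real-valued stochastic process ξ = (ξ(t))_{t∈T} satisfies the strengthened Cramér condition, is centered (E ξ(t) = 0 for all t ∈ T), and is nondegenerate in the sense that sup_{t∈T} Var ξ(t) > 0. Then there exist constants 0 < C₁ ≤ C₂ < ∞ such that for every λ with |λ| ≤ 1 one has C₁ λ² ≤ φ(λ) ≤ C₂ λ². -/

import Mathlib

open MeasureTheory ProbabilityTheory Real Set
open scoped ENNReal NNReal

/-- The strengthened Cramér condition: for every `μ > 0` there is `x₀ > 0` such that
for all `x > x₀`, `sup_{t ∈ T} P(|ξ t| > x) ≤ exp (-μ x)`. -/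
def StrengthenedCramer {T Ω : Type*} [MeasurableSpace Ω]
    (P : Measure Ω) (ξ : T → Ω → ℝ) : Prop :=
  ∀ μ : ℝ, 0 < μ → ∃ x₀ : ℝ, 0 < x₀ ∧ ∀ x : ℝ, x₀ < x →
    (⨆ t : T, P {ω | x < |ξ t ω|}) ≤ ENNReal.ofReal (Real.exp (-μ * x))

/-- `φ(λ) = sup_{t ∈ T} max( log E exp(λ ξ(t)), log E exp(−λ ξ(t)) )`. -/
noncomputable def phiFun {T Ω : Type*} [MeasurableSpace Ω]
    (P : Measure Ω) (ξ : T → Ω → ℝ) (l : ℝ) : ℝ :=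
  ⨆ t : T, max (Real.log (∫ ω, Real.exp (l * ξ t ω) ∂P))
               (Real.log (∫ ω, Real.exp (-l * ξ t ω) ∂P))

lemma aux_abs_exp (u : ℝ) : |Real.exp u - 1 - u| ≤ u ^ 2 * Real.exp |u| := by
  rcases le_or_gt |u| 1 with h | h
  · calc |Real.exp u - 1 - u| ≤ u ^ 2 := Real.abs_exp_sub_one_sub_id_le h
    _ ≤ u ^ 2 * Real.exp |u| := le_mul_of_one_le_right (sq_nonneg u) (Real.one_le_exp (abs_nonneg u))
  · have hu2 : 1 ≤ u ^ 2 := by nlinarith [abs_nonneg u, sq_abs u]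
    have hlo : 0 ≤ Real.exp u - 1 - u := by linarith [Real.add_one_le_exp u]
    rw [abs_of_nonneg hlo]
    rcases abs_cases u with ⟨hue, hpos⟩ | ⟨hue, hneg⟩
    · have : Real.exp u - 1 - u ≤ Real.exp u := by linarith
      calc Real.exp u - 1 - u ≤ Real.exp u := this
      _ = Real.exp |u| := by rw [hue]
      _ ≤ u ^ 2 * Real.exp |u| := le_mul_of_one_le_left (Real.exp_pos _).le hu2
    · have h1 : Real.exp u ≤ 1 := Real.exp_le_one_iff.mpr (by linarith)
      calc Real.exp u - 1 - u ≤ -u := by linarith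
      _ = |u| := hue.symm
      _ ≤ Real.exp |u| := by linarith [Real.add_one_le_exp |u|, abs_nonneg u]
      _ ≤ u ^ 2 * Real.exp |u| := le_mul_of_one_le_left (Real.exp_pos _).le hu2

lemma aux_cosh (u : ℝ) : 2 + u ^ 2 ≤ Real.exp u + Real.exp (-u) := by
  have key : ∀ v : ℝ, 0 ≤ v → 2 + v ^ 2 ≤ Real.exp v + Real.exp (-v) := by
    intro v hv
    have hs : v / 2 ≤ Real.sinh (v / 2) := Real.self_le_sinh_iff.mpr (by linarith)
    have hc : Real.cosh v = 1 + 2 * Real.sinh (v / 2) ^ 2 := by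
      have := Real.cosh_two_mul (v / 2)
      have h2 : 2 * (v / 2) = v := by ring
      rw [h2] at this
      rw [this, Real.cosh_sq]; ring
    have : 1 + v ^ 2 / 2 ≤ Real.cosh v := by
      rw [hc]; nlinarith
    rw [Real.cosh_eq] at this; linarith
  rcases le_or_gt 0 u with h | h
  · exact key u h
  · have := key (-u) (by linarith); rw [neg_neg] at this; linarith [this]

lemma aux_log_ge {x : ℝ} (hx : 0 ≤ x) : x / (1 + x) ≤ Real.log (1 + x) := by
  have h1 : (0:ℝ) < 1 + x := by linarith
  have := Real.log_le_sub_one_of_pos (inv_pos.mpr h1)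
  rw [Real.log_inv] at this
  have h2 : -(1 + x)⁻¹ + 1 ≤ Real.log (1 + x) := by linarith
  have heq : x / (1 + x) = -(1 + x)⁻¹ + 1 := by field_simp; ring
  linarith [heq ▸ h2]

lemma aux_poly_exp {y : ℝ} (hy : 0 ≤ y) : y ≤ Real.exp (2 * y) ∧ y ^ 2 ≤ 2 * Real.exp y := by
  constructor
  · have := Real.add_one_le_exp (2 * y); linarith
  · have := Real.sum_le_exp_of_nonneg hy 3
    simp [Finset.sum_range_succ] at this
    nlinarith

lemma exp_two_abs_lintegral {Ω : Type*} [MeasurableSpace Ω] (P : Measure Ω) [IsProbabilityMeasure P]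
    (X : Ω → ℝ) (hX : Measurable X) (N : ℕ)
    (htail : ∀ k : ℕ, P {ω | (N : ℝ) + k < |X ω|} ≤ ENNReal.ofReal (Real.exp (-3 * ((N : ℝ) + k)))) :
    ∫⁻ ω, ENNReal.ofReal (Real.exp (2 * |X ω|)) ∂P
      ≤ ENNReal.ofReal (Real.exp (2 * ((N : ℝ) + 1)) + 2 * Real.exp 4) := by
  set A : ℕ → Set Ω := fun k => {ω | (N : ℝ) + k < |X ω|} with hA
  have hAm : ∀ k, MeasurableSet (A k) := fun k =>
    measurableSet_lt measurable_const hX.abs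
  set f : ℕ → Ω → ℝ≥0∞ := fun k => (A k).indicator
    (fun _ => ENNReal.ofReal (Real.exp (2 * ((N : ℝ) + k + 2)))) with hf
  have hpt : ∀ ω, ENNReal.ofReal (Real.exp (2 * |X ω|))
      ≤ ENNReal.ofReal (Real.exp (2 * ((N : ℝ) + 1))) + ∑' k, f k ω := by
    intro ω
    rcases le_or_gt (|X ω|) ((N : ℝ) + 1) with h | h
    · exact le_trans (ENNReal.ofReal_le_ofReal (Real.exp_le_exp.mpr (by linarith))) le_self_add
    · set m : ℕ := ⌊|X ω|⌋₊ with hm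
      have habs : (0:ℝ) ≤ |X ω| := abs_nonneg _
      have hmle : (m : ℝ) ≤ |X ω| := Nat.floor_le habs
      have hltm : |X ω| < (m : ℝ) + 1 := Nat.lt_floor_add_one _
      have hNm : N + 1 ≤ m := Nat.le_floor (by push_cast; linarith)
      set k : ℕ := m - (N + 1) with hk
      have hmk : m = N + 1 + k := by omega
      have hωA : ω ∈ A k := by
        simp only [hA, Set.mem_setOf_eq]
        have : ((N : ℝ)) + k = (m : ℝ) - 1 := by
          rw [hmk]; push_cast; ring
        rw [this]; linarith
      have hle : ENNReal.ofReal (Real.exp (2 * |X ω|)) ≤ f k ω := by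
        rw [hf]; simp only [Set.indicator_of_mem hωA]
        apply ENNReal.ofReal_le_ofReal
        apply Real.exp_le_exp.mpr
        have : ((N:ℝ) + k + 2) = (m : ℝ) + 1 := by rw [hmk]; push_cast; ring
        rw [this]; linarith
      exact le_trans (le_trans hle (ENNReal.le_tsum k)) le_add_self
  calc ∫⁻ ω, ENNReal.ofReal (Real.exp (2 * |X ω|)) ∂P
      ≤ ∫⁻ ω, (ENNReal.ofReal (Real.exp (2 * ((N : ℝ) + 1))) + ∑' k, f k ω) ∂P :=
        lintegral_mono hpt
    _ = ENNReal.ofReal (Real.exp (2 * ((N : ℝ) + 1))) + ∑' k, ∫⁻ ω, f k ω ∂P := by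
        rw [lintegral_add_left measurable_const, lintegral_const, measure_univ, mul_one,
          lintegral_tsum (fun k => ((measurable_const.indicator (hAm k)).aemeasurable))]
    _ ≤ ENNReal.ofReal (Real.exp (2 * ((N : ℝ) + 1))) + ENNReal.ofReal (2 * Real.exp 4) := by
        gcongr
        have hstep : ∀ k : ℕ, ∫⁻ ω, f k ω ∂P ≤ ENNReal.ofReal (Real.exp 4) * (ENNReal.ofReal (1/2)) ^ k := by
          intro k
          rw [hf]
          simp only []
          rw [lintegral_indicator_const (hAm k)]
          calc ENNReal.ofReal (Real.exp (2 * ((N : ℝ) + k + 2))) * P (A k)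
              ≤ ENNReal.ofReal (Real.exp (2 * ((N : ℝ) + k + 2))) * ENNReal.ofReal (Real.exp (-3 * ((N : ℝ) + k))) := by
                gcongr; exact htail k
            _ = ENNReal.ofReal (Real.exp (2 * ((N : ℝ) + k + 2)) * Real.exp (-3 * ((N : ℝ) + k))) := by
                rw [ENNReal.ofReal_mul (Real.exp_pos _).le]
            _ ≤ ENNReal.ofReal (Real.exp 4 * (1/2) ^ k) := by
                apply ENNReal.ofReal_le_ofReal
                rw [← Real.exp_add]
                have h2e : (2:ℝ) ≤ Real.exp 1 := by
                  linarith [Real.add_one_le_exp 1]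
                have hek : Real.exp (-(k:ℝ)) ≤ (1/2) ^ k := by
                  rw [← Real.exp_one_rpow (-(k:ℝ))]
                  rw [Real.rpow_neg (Real.exp_pos 1).le, Real.rpow_natCast]
                  rw [one_div, ← inv_pow]
                  apply pow_le_pow_left₀ (by positivity)
                  rw [inv_le_inv₀ (Real.exp_pos 1) (by norm_num)]
                  exact h2e
                have hsplit : 2 * ((N : ℝ) + k + 2) + -3 * ((N : ℝ) + k) = 4 + (-(N:ℝ)) + (-(k:ℝ)) := by ring
                rw [hsplit, Real.exp_add, Real.exp_add]
                have h1 : Real.exp (-(N:ℝ)) ≤ 1 := Real.exp_le_one_iff.mpr (neg_nonpos.mpr (Nat.cast_nonneg N))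
                calc Real.exp 4 * Real.exp (-(N:ℝ)) * Real.exp (-(k:ℝ))
                    ≤ Real.exp 4 * 1 * ((1/2) ^ k) := by
                      apply mul_le_mul (by nlinarith [Real.exp_pos 4, Real.exp_pos (-(N:ℝ))]) hek (Real.exp_pos _).le (by positivity)
                  _ = Real.exp 4 * (1/2) ^ k := by ring
            _ = ENNReal.ofReal (Real.exp 4) * (ENNReal.ofReal (1/2)) ^ k := by
                rw [ENNReal.ofReal_mul (Real.exp_pos _).le, ENNReal.ofReal_pow (by norm_num)]
        calc ∑' k, ∫⁻ ω, f k ω ∂P ≤ ∑' k : ℕ, ENNReal.ofReal (Real.exp 4) * (ENNReal.ofReal (1/2)) ^ k :=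
              ENNReal.tsum_le_tsum hstep
          _ = ENNReal.ofReal (Real.exp 4) * (1 - ENNReal.ofReal (1/2))⁻¹ := by
              rw [ENNReal.tsum_mul_left, ENNReal.tsum_geometric]
          _ = ENNReal.ofReal (2 * Real.exp 4) := by
              have h12' : ENNReal.ofReal (1/2 : ℝ) = 2⁻¹ := by
                rw [ENNReal.ofReal_div_of_pos (by norm_num), ENNReal.ofReal_one, ENNReal.ofReal_ofNat, one_div]
              rw [h12']
              have h12 : (1 : ℝ≥0∞) - 2⁻¹ = 2⁻¹ := by
                exact ENNReal.one_sub_inv_two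
              rw [h12, inv_inv, ENNReal.ofReal_mul (by norm_num), ENNReal.ofReal_ofNat, mul_comm]
    _ = ENNReal.ofReal (Real.exp (2 * ((N : ℝ) + 1)) + 2 * Real.exp 4) := by
        rw [ENNReal.ofReal_add (Real.exp_pos _).le (by positivity)]

lemma integrable_of_lintegral_exp {Ω : Type*} [MeasurableSpace Ω] (P : Measure Ω)
    [IsProbabilityMeasure P] (X : Ω → ℝ) (hX : Measurable X) {M : ℝ}
    (hlin : ∫⁻ ω, ENNReal.ofReal (Real.exp (2 * |X ω|)) ∂P ≤ ENNReal.ofReal M) :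
    Integrable (fun ω => Real.exp (2 * |X ω|)) P ∧ ∫ ω, Real.exp (2 * |X ω|) ∂P ≤ M := by
  have hMnn : 0 ≤ M := by
    by_contra h
    push_neg at h
    rw [ENNReal.ofReal_eq_zero.mpr h.le] at hlin
    have h1 : ∫⁻ ω, ENNReal.ofReal (Real.exp (2 * |X ω|)) ∂P ≥ ∫⁻ _, ENNReal.ofReal (Real.exp 0) ∂P := by
      apply lintegral_mono
      intro ω
      exact ENNReal.ofReal_le_ofReal (Real.exp_le_exp.mpr (by positivity))
    simp [Real.exp_zero] at h1
    rw [le_zero_iff] at hlin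
    rw [hlin] at h1
    simp at h1
  have hmeas' : AEStronglyMeasurable (fun ω => Real.exp (2 * |X ω|)) P :=
    (Real.measurable_exp.comp (hX.abs.const_mul 2)).aestronglyMeasurable
  have hnn : 0 ≤ᵐ[P] fun ω => Real.exp (2 * |X ω|) :=
    Filter.Eventually.of_forall fun ω => (Real.exp_pos _).le
  have hint : Integrable (fun ω => Real.exp (2 * |X ω|)) P := by
    refine ⟨hmeas', ?_⟩
    rw [hasFiniteIntegral_iff_ofReal hnn]
    exact lt_of_le_of_lt hlin ENNReal.ofReal_lt_top
  refine ⟨hint, ?_⟩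
  rw [integral_eq_lintegral_of_nonneg_ae hnn hmeas']
  exact ENNReal.toReal_le_of_le_ofReal hMnn hlin

/-- per-point upper bound on `log ∫ exp (l X)`. -/
lemma log_integral_exp_le {Ω : Type*} [MeasurableSpace Ω] (P : Measure Ω)
    [IsProbabilityMeasure P] (X : Ω → ℝ)
    (hcent : ∫ ω, X ω ∂P = 0) {K l : ℝ} (hl : |l| ≤ 1)
    (hint_exp : Integrable (fun ω => Real.exp (l * X ω)) P)
    (hint_X : Integrable X P)
    (hint_se : Integrable (fun ω => X ω ^ 2 * Real.exp |X ω|) P)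
    (hse : ∫ ω, X ω ^ 2 * Real.exp |X ω| ∂P ≤ K) :
    Real.log (∫ ω, Real.exp (l * X ω) ∂P) ≤ K * l ^ 2 := by
  have hKnn : 0 ≤ K :=
    le_trans (integral_nonneg fun ω => by positivity) hse
  have hpt : ∀ ω, Real.exp (l * X ω) ≤ 1 + l * X ω + l ^ 2 * (X ω ^ 2 * Real.exp |X ω|) := by
    intro ω
    have h1 := aux_abs_exp (l * X ω)
    rw [abs_le] at h1
    have h2 : (l * X ω) ^ 2 * Real.exp |l * X ω| ≤ l ^ 2 * (X ω ^ 2 * Real.exp |X ω|) := by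
      rw [abs_mul, mul_pow]
      have he : Real.exp (|l| * |X ω|) ≤ Real.exp |X ω| :=
        Real.exp_le_exp.mpr (by nlinarith [abs_nonneg (X ω), abs_nonneg l])
      have : 0 ≤ l ^ 2 * X ω ^ 2 := by positivity
      nlinarith [Real.exp_pos (|l| * |X ω|)]
    linarith [h1.2]
  have hint_rhs : Integrable (fun ω => 1 + l * X ω + l ^ 2 * (X ω ^ 2 * Real.exp |X ω|)) P :=
    ((integrable_const 1).add (hint_X.const_mul l)).add (hint_se.const_mul (l ^ 2))
  have hA_le : ∫ ω, Real.exp (l * X ω) ∂P ≤ 1 + K * l ^ 2 := by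
    calc ∫ ω, Real.exp (l * X ω) ∂P
        ≤ ∫ ω, (1 + l * X ω + l ^ 2 * (X ω ^ 2 * Real.exp |X ω|)) ∂P :=
          integral_mono hint_exp hint_rhs hpt
      _ = 1 + l * (∫ ω, X ω ∂P) + l ^ 2 * ∫ ω, X ω ^ 2 * Real.exp |X ω| ∂P := by
          have hi2 : Integrable (fun ω => l * X ω) P := hint_X.const_mul l
          have hi1 : Integrable (fun ω => 1 + l * X ω) P := (integrable_const 1).add hi2
          have hi3 : Integrable (fun ω => l ^ 2 * (X ω ^ 2 * Real.exp |X ω|)) P :=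
            hint_se.const_mul (l ^ 2)
          rw [integral_add hi1 hi3, integral_add (integrable_const 1) hi2,
            integral_const, integral_const_mul, integral_const_mul]
          simp [measure_univ]
      _ ≤ 1 + K * l ^ 2 := by
          rw [hcent]
          have : l ^ 2 * ∫ ω, X ω ^ 2 * Real.exp |X ω| ∂P ≤ l ^ 2 * K :=
            mul_le_mul_of_nonneg_left hse (sq_nonneg l)
          linarith
  have hApos : 0 < ∫ ω, Real.exp (l * X ω) ∂P := mgf_pos hint_exp
  calc Real.log (∫ ω, Real.exp (l * X ω) ∂P) ≤ Real.log (1 + K * l ^ 2) :=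
        Real.log_le_log hApos hA_le
    _ ≤ 1 + K * l ^ 2 - 1 := Real.log_le_sub_one_of_pos (by positivity)
    _ = K * l ^ 2 := by ring

/-- If the centered process `ξ` satisfies the strengthened Cramér condition and is
nondegenerate (`sup_t Var ξ(t) > 0`), then there are constants `0 < C₁ ≤ C₂ < ∞`
such that `C₁ λ² ≤ φ(λ) ≤ C₂ λ²` for all `|λ| ≤ 1`. -/
theorem phi_quadratic_near_zero
    {T : Type*} [MetricSpace T] [CompactSpace T] [Nonempty T]
    {Ω : Type*} [MeasurableSpace Ω] (P : Measure Ω) [IsProbabilityMeasure P]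
    (ξ : T → Ω → ℝ) (hmeas : ∀ t, Measurable (ξ t))
    (hCramer : StrengthenedCramer P ξ)
    (hcent : ∀ t : T, ∫ ω, ξ t ω ∂P = 0)
    (hnondeg : 0 < ⨆ t : T, variance (ξ t) P) :
    ∃ C₁ C₂ : ℝ, 0 < C₁ ∧ C₁ ≤ C₂ ∧
      ∀ l : ℝ, |l| ≤ 1 →
        C₁ * l ^ 2 ≤ phiFun P ξ l ∧ phiFun P ξ l ≤ C₂ * l ^ 2 := by
  obtain ⟨x₀, hx₀pos, htail⟩ := hCramer 3 (by norm_num)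
  set N : ℕ := ⌊x₀⌋₊ + 1 with hN
  have hx₀N : ∀ k : ℕ, x₀ < (N : ℝ) + k := by
    intro k
    have h1 : x₀ < (⌊x₀⌋₊ : ℝ) + 1 := Nat.lt_floor_add_one x₀
    have h2 : ((N : ℝ)) = (⌊x₀⌋₊ : ℝ) + 1 := by rw [hN]; push_cast; ring
    have hk : (0:ℝ) ≤ k := Nat.cast_nonneg k
    linarith
  set M : ℝ := Real.exp (2 * ((N : ℝ) + 1)) + 2 * Real.exp 4 with hM
  have hMpos : 0 < M := by positivity
  have htail' : ∀ (t : T) (k : ℕ),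
      P {ω | (N : ℝ) + k < |ξ t ω|} ≤ ENNReal.ofReal (Real.exp (-3 * ((N : ℝ) + k))) := by
    intro t k
    exact le_trans (le_iSup (fun t => P {ω | (N : ℝ) + k < |ξ t ω|}) t) (htail _ (hx₀N k))
  have hlin := fun t => exp_two_abs_lintegral P (ξ t) (hmeas t) N (htail' t)
  have hgib := fun t => integrable_of_lintegral_exp P (ξ t) (hmeas t) (hlin t)
  have hint_X : ∀ t, Integrable (ξ t) P := by
    intro t
    refine (hgib t).1.mono' (hmeas t).aestronglyMeasurable ?_
    filter_upwards with ω
    rw [Real.norm_eq_abs]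
    exact (aux_poly_exp (abs_nonneg (ξ t ω))).1
  have hint_g2 : ∀ t, Integrable (fun ω => 2 * Real.exp (2 * |ξ t ω|)) P :=
    fun t => (hgib t).1.const_mul 2
  have hexp_mono : ∀ t (ω : Ω), Real.exp |ξ t ω| ≤ Real.exp (2 * |ξ t ω|) := by
    intro t ω
    exact Real.exp_le_exp.mpr (by linarith [abs_nonneg (ξ t ω)])
  have hint_sq : ∀ t, Integrable (fun ω => ξ t ω ^ 2) P := by
    intro t
    refine (hint_g2 t).mono' ((hmeas t).pow_const 2).aestronglyMeasurable ?_
    filter_upwards with ω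
    rw [Real.norm_eq_abs, abs_of_nonneg (sq_nonneg _)]
    have h1 := (aux_poly_exp (abs_nonneg (ξ t ω))).2
    calc ξ t ω ^ 2 = |ξ t ω| ^ 2 := (sq_abs _).symm
      _ ≤ 2 * Real.exp |ξ t ω| := h1
      _ ≤ 2 * Real.exp (2 * |ξ t ω|) := by linarith [hexp_mono t ω]
  have hptse : ∀ t (ω : Ω), ξ t ω ^ 2 * Real.exp |ξ t ω| ≤ 2 * Real.exp (2 * |ξ t ω|) := by
    intro t ω
    have h1 := (aux_poly_exp (abs_nonneg (ξ t ω))).2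
    have h2 : ξ t ω ^ 2 ≤ 2 * Real.exp |ξ t ω| := by
      rw [← sq_abs]; exact h1
    calc ξ t ω ^ 2 * Real.exp |ξ t ω| ≤ (2 * Real.exp |ξ t ω|) * Real.exp |ξ t ω| :=
          mul_le_mul_of_nonneg_right h2 (Real.exp_pos _).le
      _ = 2 * Real.exp (|ξ t ω| + |ξ t ω|) := by rw [Real.exp_add]; ring
      _ = 2 * Real.exp (2 * |ξ t ω|) := by ring_nf
  have hint_se : ∀ t, Integrable (fun ω => ξ t ω ^ 2 * Real.exp |ξ t ω|) P := by
    intro t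
    refine (hint_g2 t).mono'
      (((hmeas t).pow_const 2).mul (Real.measurable_exp.comp (hmeas t).abs)).aestronglyMeasurable ?_
    filter_upwards with ω
    rw [Real.norm_eq_abs, abs_of_nonneg (by positivity)]
    exact hptse t ω
  have hse_bd : ∀ t, ∫ ω, ξ t ω ^ 2 * Real.exp |ξ t ω| ∂P ≤ 2 * M := by
    intro t
    calc ∫ ω, ξ t ω ^ 2 * Real.exp |ξ t ω| ∂P
        ≤ ∫ ω, 2 * Real.exp (2 * |ξ t ω|) ∂P :=
          integral_mono (hint_se t) (hint_g2 t) (hptse t)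
      _ = 2 * ∫ ω, Real.exp (2 * |ξ t ω|) ∂P := integral_const_mul 2 _
      _ ≤ 2 * M := by linarith [(hgib t).2]
  have hint_exp : ∀ t (l : ℝ), |l| ≤ 1 → Integrable (fun ω => Real.exp (l * ξ t ω)) P := by
    intro t l hl
    refine (hgib t).1.mono'
      (Real.measurable_exp.comp ((hmeas t).const_mul l)).aestronglyMeasurable ?_
    filter_upwards with ω
    rw [Real.norm_eq_abs, abs_of_nonneg (Real.exp_pos _).le]
    apply Real.exp_le_exp.mpr
    calc l * ξ t ω ≤ |l * ξ t ω| := le_abs_self _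
      _ = |l| * |ξ t ω| := abs_mul _ _
      _ ≤ 1 * |ξ t ω| := mul_le_mul_of_nonneg_right hl (abs_nonneg _)
      _ ≤ 2 * |ξ t ω| := by linarith [abs_nonneg (ξ t ω)]
  set K : ℝ := 2 * M with hK
  have hKpos : 0 < K := by positivity
  have hup : ∀ (l : ℝ), |l| ≤ 1 → ∀ t,
      max (Real.log (∫ ω, Real.exp (l * ξ t ω) ∂P))
        (Real.log (∫ ω, Real.exp (-l * ξ t ω) ∂P)) ≤ K * l ^ 2 := by
    intro l hl t
    have hl' : |(-l)| ≤ 1 := by rwa [abs_neg]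
    have h1 := log_integral_exp_le P (ξ t) (hcent t) hl (hint_exp t l hl)
      (hint_X t) (hint_se t) (hse_bd t)
    have h2 := log_integral_exp_le P (ξ t) (hcent t) hl' (hint_exp t (-l) hl')
      (hint_X t) (hint_se t) (hse_bd t)
    have hsq : ((-l) : ℝ) ^ 2 = l ^ 2 := by ring
    rw [hsq] at h2
    exact max_le h1 h2
  -- choose a point of positive variance
  have ht₀ : ∃ t₀, 0 < variance (ξ t₀) P := by
    by_contra h
    push_neg at h
    have : (⨆ t, variance (ξ t) P) ≤ 0 := ciSup_le h
    linarith
  obtain ⟨t₀, hvpos⟩ := ht₀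
  set v : ℝ := variance (ξ t₀) P with hv
  have hvint : v = ∫ ω, ξ t₀ ω ^ 2 ∂P := by
    have hmem : MemLp (ξ t₀) 2 P :=
      (memLp_two_iff_integrable_sq (hmeas t₀).aestronglyMeasurable).mpr (hint_sq t₀)
    rw [hv, variance_eq_sub hmem, hcent t₀]
    simp only [Pi.pow_apply]
    ring
  set C₁ : ℝ := (v / 2) / (1 + v / 2) with hC₁
  have hC₁pos : 0 < C₁ := by
    apply div_pos (by linarith) (by linarith)
  refine ⟨C₁, K + C₁, hC₁pos, le_add_of_nonneg_left hKpos.le, ?_⟩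
  intro l hl
  have hl2 : l ^ 2 ≤ 1 := by nlinarith [sq_abs l, abs_nonneg l]
  constructor
  · -- lower bound
    have hexpA := hint_exp t₀ l hl
    have hl' : |(-l)| ≤ 1 := by rwa [abs_neg]
    have hexpB := hint_exp t₀ (-l) hl'
    set A : ℝ := ∫ ω, Real.exp (l * ξ t₀ ω) ∂P with hAdef
    set B : ℝ := ∫ ω, Real.exp (-l * ξ t₀ ω) ∂P with hBdef
    have hAB : 2 + l ^ 2 * v ≤ A + B := by
      have hpt : ∀ ω, 2 + l ^ 2 * ξ t₀ ω ^ 2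
          ≤ Real.exp (l * ξ t₀ ω) + Real.exp (-l * ξ t₀ ω) := by
        intro ω
        have h := aux_cosh (l * ξ t₀ ω)
        have h2 : (l * ξ t₀ ω) ^ 2 = l ^ 2 * ξ t₀ ω ^ 2 := by ring
        have h3 : -l * ξ t₀ ω = -(l * ξ t₀ ω) := by ring
        rw [h2] at h
        rw [h3]
        exact h
      have hiL : Integrable (fun ω => l ^ 2 * ξ t₀ ω ^ 2) P := (hint_sq t₀).const_mul _
      have hiL' : Integrable (fun ω => 2 + l ^ 2 * ξ t₀ ω ^ 2) P := (integrable_const 2).add hiL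
      have hiR : Integrable (fun ω => Real.exp (l * ξ t₀ ω) + Real.exp (-l * ξ t₀ ω)) P :=
        hexpA.add hexpB
      calc 2 + l ^ 2 * v = ∫ ω, (2 + l ^ 2 * ξ t₀ ω ^ 2) ∂P := by
            rw [integral_add (integrable_const 2) hiL, integral_const, integral_const_mul]
            simp [measure_univ, hvint]
        _ ≤ ∫ ω, (Real.exp (l * ξ t₀ ω) + Real.exp (-l * ξ t₀ ω)) ∂P :=
            integral_mono hiL' hiR hpt
        _ = A + B := integral_add hexpA hexpB
    have hApos : 0 < A := mgf_pos hexpA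
    have hBpos : 0 < B := mgf_pos hexpB
    have hmaxAB : 1 + l ^ 2 * (v / 2) ≤ max A B := by
      rcases le_total A B with h | h
      · rw [max_eq_right h]; linarith
      · rw [max_eq_left h]; linarith
    have hlog1 : C₁ * l ^ 2 ≤ Real.log (1 + l ^ 2 * (v / 2)) := by
      have hxnn : 0 ≤ l ^ 2 * (v / 2) := by positivity
      have h1 := aux_log_ge hxnn
      have hle : l ^ 2 * (v / 2) ≤ v / 2 := by nlinarith
      have h2 : C₁ * l ^ 2 ≤ (l ^ 2 * (v / 2)) / (1 + l ^ 2 * (v / 2)) := by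
        rw [hC₁]
        rw [div_mul_eq_mul_div, div_le_div_iff₀ (by linarith) (by linarith)]
        nlinarith [sq_nonneg l]
      linarith
    have hlogmax : Real.log (1 + l ^ 2 * (v / 2)) ≤ max (Real.log A) (Real.log B) := by
      rcases le_total A B with h | h
      · calc Real.log (1 + l ^ 2 * (v / 2)) ≤ Real.log B := by
              apply Real.log_le_log (by positivity)
              rw [max_eq_right h] at hmaxAB; linarith
          _ ≤ max (Real.log A) (Real.log B) := le_max_right _ _
      · calc Real.log (1 + l ^ 2 * (v / 2)) ≤ Real.log A := by
              apply Real.log_le_log (by positivity)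
              rw [max_eq_left h] at hmaxAB; linarith
          _ ≤ max (Real.log A) (Real.log B) := le_max_left _ _
    have hbdd : BddAbove (Set.range fun t =>
        max (Real.log (∫ ω, Real.exp (l * ξ t ω) ∂P))
          (Real.log (∫ ω, Real.exp (-l * ξ t ω) ∂P))) := by
      refine ⟨K * l ^ 2, ?_⟩
      rintro x ⟨t, rfl⟩
      exact hup l hl t
    have hle_sup := le_ciSup hbdd t₀
    calc C₁ * l ^ 2 ≤ Real.log (1 + l ^ 2 * (v / 2)) := hlog1
      _ ≤ max (Real.log A) (Real.log B) := hlogmax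
      _ ≤ phiFun P ξ l := hle_sup
  · -- upper bound
    have h1 : phiFun P ξ l ≤ K * l ^ 2 := ciSup_le (hup l hl)
    have h2 : K * l ^ 2 ≤ (K + C₁) * l ^ 2 := by nlinarith [sq_nonneg l]
    linarith
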